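/- Let X be a length space and Λ(X) the group of ρ-loops at the basepoint * under cancelled concatenation. Then Λ(X) acts freely by isometries on the space X̄ of ρ-paths at * via left cancelled concatenation: k·c := k⋆c, and d(k⋆c₁, k⋆c₂) = d(c₁,c₂) for all k ∈ Λ(X) and c₁,c₂ ∈ X̄. -/
import Mathlib


open Set

/-- An arclength-parameterized weakly normal rectifiable path (ρ-path) in a metric
space `X`.  The path is defined on `[0, len]`, extended constantly outside. -/
structure RPath (X : Type*) [MetricSpace X] where
  /-- the length of the path -/
  len : ℝ
  len_nonneg : 0 ≤ len
  toFun : ℝ → X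
  contOn : ContinuousOn toFun (Icc 0 len)
  /-- arclength parameterization: the length of the restriction to `[s,t]` is `t - s`. -/
  arclength : ∀ s t : ℝ, 0 ≤ s → s ≤ t → t ≤ len →
    eVariationOn toFun (Icc s t) = ENNReal.ofReal (t - s)
  clamp_left : ∀ t : ℝ, t ≤ 0 → toFun t = toFun 0
  clamp_right : ∀ t : ℝ, len ≤ t → toFun t = toFun len
  /-- weak normality: no nontrivial subsegment `[u,v]` with equal endpoints is
  null-homotopic in its own image rel endpoints. -/
  weaklyNormal : ¬ ∃ u v : ℝ, 0 ≤ u ∧ u < v ∧ v ≤ len ∧ toFun u = toFun v ∧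
    ∃ H : ℝ × ℝ → X, ContinuousOn H (Icc u v ×ˢ Icc 0 1) ∧
      (∀ t ∈ Icc u v, H (t, 0) = toFun t) ∧
      (∀ t ∈ Icc u v, H (t, 1) = toFun u) ∧
      (∀ s ∈ Icc (0:ℝ) 1, H (u, s) = toFun u ∧ H (v, s) = toFun v) ∧
      (∀ p ∈ Icc u v ×ˢ Icc (0:ℝ) 1, H p ∈ toFun '' Icc u v)

namespace RPath

variable {X : Type*} [MetricSpace X]

/-- `c` starts at the point `p`. -/
def StartsAt (c : RPath X) (p : X) : Prop := c.toFun 0 = p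

/-- `c` ends at the point `p`. -/
def EndsAt (c : RPath X) (p : X) : Prop := c.toFun c.len = p

/-- The length `L(c₁ ∧ c₂)` of the longest common initial segment of two paths. -/
noncomputable def wedgeLen (c₁ c₂ : RPath X) : ℝ :=
  sSup {b : ℝ | 0 ≤ b ∧ b ≤ c₁.len ∧ b ≤ c₂.len ∧ ∀ t ∈ Icc 0 b, c₁.toFun t = c₂.toFun t}

/-- The distance `d(c₁,c₂) = L(c₁) + L(c₂) - 2 L(c₁ ∧ c₂)`. -/
noncomputable def rhoDist (c₁ c₂ : RPath X) : ℝ :=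
  c₁.len + c₂.len - 2 * wedgeLen c₁ c₂

end RPath

/-- A length space: a metric space with at least two points in which any two points
are joined by paths of length arbitrarily close to the distance between them. -/
def IsLengthSpace (X : Type*) [MetricSpace X] : Prop :=
  (∃ x y : X, x ≠ y) ∧
  ∀ x y : X, ∀ ε : ℝ, 0 < ε → ∃ (c : ℝ → X) (b : ℝ), 0 ≤ b ∧
    ContinuousOn c (Icc 0 b) ∧ c 0 = x ∧ c b = y ∧
    eVariationOn c (Icc 0 b) < ENNReal.ofReal (dist x y + ε)

namespace RPath

variable {X : Type*} [MetricSpace X]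

/-- The amount of cancellation between a path `k` and a following path `c`: the
length of the maximal final segment of `k` that coincides, with reversed
orientation, with an initial segment of `c`. -/
noncomputable def cancelAmt (k c : RPath X) : ℝ :=
  sSup {s : ℝ | 0 ≤ s ∧ s ≤ k.len ∧ s ≤ c.len ∧
    ∀ t ∈ Set.Icc 0 s, k.toFun (k.len - t) = c.toFun t}

/-- `m` is the cancelled concatenation `k ⋆ c`: it is obtained from the concatenation
`k ∗ c` by removing the maximal final segment of `k` coinciding with an initial
segment of `c` with reversed orientation, together with that initial segment of
`c`. -/
def IsCancelConcat (k c m : RPath X) : Prop :=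
  m.len = k.len + c.len - 2 * cancelAmt k c ∧
  (∀ t ∈ Set.Icc 0 (k.len - cancelAmt k c), m.toFun t = k.toFun t) ∧
  (∀ t ∈ Set.Icc (k.len - cancelAmt k c) m.len,
    m.toFun t = c.toFun (t - (k.len - cancelAmt k c) + cancelAmt k c))

/-- `r` is the reverse `c⁻¹` of the path `c`. -/
def IsReverse (c r : RPath X) : Prop :=
  r.len = c.len ∧ ∀ t ∈ Set.Icc 0 c.len, r.toFun t = c.toFun (c.len - t)

end RPath

namespace RPath

variable {X : Type*} [MetricSpace X]

lemma continuous_toFun (c : RPath X) : Continuous c.toFun := by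
  have h : ∀ t : ℝ, c.toFun t = c.toFun (min (max t 0) c.len) := by
    intro t
    rcases le_total t 0 with h0 | h0
    · rw [c.clamp_left t h0, max_eq_right h0, min_eq_left c.len_nonneg]
    · rcases le_total t c.len with h1 | h1
      · rw [max_eq_left h0, min_eq_left h1]
      · rw [c.clamp_right t h1, max_eq_left h0, min_eq_right h1]
  have hc : Continuous fun t => c.toFun (min (max t 0) c.len) := by
    apply c.contOn.comp_continuous (by continuity)
    intro x
    exact ⟨le_min (le_max_right _ _) c.len_nonneg, min_le_right _ _⟩
  exact hc.congr (fun t => (h t).symm)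

lemma ext' {c₁ c₂ : RPath X} (hlen : c₁.len = c₂.len)
    (hfun : ∀ t ∈ Icc 0 c₁.len, c₁.toFun t = c₂.toFun t) : c₁ = c₂ := by
  have hf : c₁.toFun = c₂.toFun := by
    funext t
    rcases le_total t 0 with h0 | h0
    · rw [c₁.clamp_left t h0, c₂.clamp_left t h0]
      exact hfun 0 ⟨le_refl 0, c₁.len_nonneg⟩
    · rcases le_total t c₁.len with h1 | h1
      · exact hfun t ⟨h0, h1⟩
      · rw [c₁.clamp_right t h1, c₂.clamp_right t (hlen ▸ h1), ← hlen]
        exact hfun c₁.len ⟨c₁.len_nonneg, le_refl _⟩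
  cases c₁; cases c₂
  simp only [mk.injEq] at *
  exact ⟨hlen, hf⟩

lemma agree_csSup_mem {f g : ℝ → X} (hf : Continuous f) (hg : Continuous g)
    {a b : ℝ} (ha : 0 ≤ a) (hb : 0 ≤ b) (h0 : f 0 = g 0) :
    sSup {s : ℝ | 0 ≤ s ∧ s ≤ a ∧ s ≤ b ∧ ∀ t ∈ Icc 0 s, f t = g t} ∈
      {s : ℝ | 0 ≤ s ∧ s ≤ a ∧ s ≤ b ∧ ∀ t ∈ Icc 0 s, f t = g t} := by
  set S := {s : ℝ | 0 ≤ s ∧ s ≤ a ∧ s ≤ b ∧ ∀ t ∈ Icc 0 s, f t = g t} with hS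
  have h0S : (0:ℝ) ∈ S := ⟨le_refl 0, ha, hb, fun t ht => by
    have ht0 : t = 0 := le_antisymm ht.2 ht.1
    rw [ht0]; exact h0⟩
  have hne : S.Nonempty := ⟨0, h0S⟩
  have hbdd : BddAbove S := ⟨a, fun s hs => hs.2.1⟩
  have hM0 : 0 ≤ sSup S := le_csSup hbdd h0S
  have hMa : sSup S ≤ a := csSup_le hne fun s hs => hs.2.1
  have hMb : sSup S ≤ b := csSup_le hne fun s hs => hs.2.2.1
  refine ⟨hM0, hMa, hMb, ?_⟩
  have hIco : ∀ t ∈ Ico 0 (sSup S), f t = g t := by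
    intro t ht
    obtain ⟨s, hsS, hts⟩ := exists_lt_of_lt_csSup hne ht.2
    exact hsS.2.2.2 t ⟨ht.1, le_of_lt hts⟩
  intro t ht
  rcases eq_or_lt_of_le hM0 with hM | hM
  · have ht0 : t = 0 := le_antisymm (by rw [← hM] at ht; exact ht.2) ht.1
    rw [ht0]; exact h0
  · have hsub : Icc 0 (sSup S) ⊆ {x | f x = g x} := by
      rw [← closure_Ico (ne_of_lt hM)]
      exact closure_minimal hIco (isClosed_eq hf hg)
    exact hsub ht

lemma no_symm (c : RPath X) {u v : ℝ} (hu : 0 ≤ u) (huv : u < v) (hv : v ≤ c.len)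
    (hsym : ∀ t ∈ Icc u v, c.toFun t = c.toFun (u + v - t)) : False := by
  apply c.weaklyNormal
  have huv' : c.toFun u = c.toFun v := by
    have := hsym u ⟨le_refl u, le_of_lt huv⟩
    simpa using this
  refine ⟨u, v, hu, huv, hv, huv', ?_⟩
  refine ⟨fun p => c.toFun (min (min p.1 (u + v - p.1)) ((1 - p.2) * ((u + v) / 2) + p.2 * u)),
    ?_, ?_, ?_, ?_, ?_⟩
  · exact (c.continuous_toFun.comp (by continuity)).continuousOn
  · intro t ht
    simp only [sub_zero, one_mul, zero_mul, add_zero]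
    rcases le_total t ((u + v) / 2) with hmid | hmid
    · have h1 : min t (u + v - t) = t := min_eq_left (by linarith)
      rw [h1, min_eq_left hmid]
    · have h1 : min t (u + v - t) = u + v - t := min_eq_right (by linarith)
      rw [h1, min_eq_left (by linarith)]
      exact (hsym t ht).symm
  · intro t ht
    dsimp only
    have h1 : u ≤ min t (u + v - t) := le_min ht.1 (by linarith [ht.2])
    have h2 : (1 - 1) * ((u + v) / 2) + 1 * u = u := by ring
    rw [h2, min_eq_right h1]
  · intro s hs
    have hq : u ≤ (1 - s) * ((u + v) / 2) + s * u := by nlinarith [hs.1, hs.2]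
    constructor
    · dsimp only
      have h1 : min u (u + v - u) = u := min_eq_left (by linarith)
      rw [h1, min_eq_left hq]
    · dsimp only
      have h1 : min v (u + v - v) = u := by rw [min_eq_right (by linarith)]; ring_nf
      rw [h1, min_eq_left hq]
      exact huv'
  · intro p hp
    refine ⟨min (min p.1 (u + v - p.1)) ((1 - p.2) * ((u + v) / 2) + p.2 * u), ⟨?_, ?_⟩, rfl⟩
    · exact le_min (le_min hp.1.1 (by linarith [hp.1.2])) (by nlinarith [hp.2.1, hp.2.2])
    · exact le_trans (min_le_left _ _) (le_trans (min_le_left _ _) hp.1.2)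

end RPath
namespace RPath

variable {X : Type*} [MetricSpace X]

lemma cancelAmt_spec {k c : RPath X} (h : k.toFun k.len = c.toFun 0) :
    0 ≤ cancelAmt k c ∧ cancelAmt k c ≤ k.len ∧ cancelAmt k c ≤ c.len ∧
      ∀ t ∈ Icc 0 (cancelAmt k c), k.toFun (k.len - t) = c.toFun t := by
  have h' : (fun t => k.toFun (k.len - t)) 0 = c.toFun 0 := by simpa using h
  exact agree_csSup_mem (k.continuous_toFun.comp (by continuity)) c.continuous_toFun
    k.len_nonneg c.len_nonneg h'

lemma le_cancelAmt {k c : RPath X} {s : ℝ} (h0 : 0 ≤ s) (hk : s ≤ k.len) (hc : s ≤ c.len)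
    (hag : ∀ t ∈ Icc 0 s, k.toFun (k.len - t) = c.toFun t) : s ≤ cancelAmt k c :=
  le_csSup ⟨k.len, fun _ hx => hx.2.1⟩ ⟨h0, hk, hc, hag⟩

lemma wedgeLen_spec {c₁ c₂ : RPath X} (h : c₁.toFun 0 = c₂.toFun 0) :
    0 ≤ wedgeLen c₁ c₂ ∧ wedgeLen c₁ c₂ ≤ c₁.len ∧ wedgeLen c₁ c₂ ≤ c₂.len ∧
      ∀ t ∈ Icc 0 (wedgeLen c₁ c₂), c₁.toFun t = c₂.toFun t :=
  agree_csSup_mem c₁.continuous_toFun c₂.continuous_toFun c₁.len_nonneg c₂.len_nonneg h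

lemma le_wedgeLen {c₁ c₂ : RPath X} {s : ℝ} (h0 : 0 ≤ s) (h1 : s ≤ c₁.len) (h2 : s ≤ c₂.len)
    (hag : ∀ t ∈ Icc 0 s, c₁.toFun t = c₂.toFun t) : s ≤ wedgeLen c₁ c₂ :=
  le_csSup ⟨c₁.len, fun _ hx => hx.2.1⟩ ⟨h0, h1, h2, hag⟩

lemma wedgeLen_comm (c₁ c₂ : RPath X) : wedgeLen c₁ c₂ = wedgeLen c₂ c₁ := by
  unfold wedgeLen
  congr 1
  ext s
  constructor <;> rintro ⟨h0, h1, h2, h3⟩ <;> exact ⟨h0, h2, h1, fun t ht => (h3 t ht).symm⟩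

lemma IsCancelConcat.start {k c m : RPath X} (hm : IsCancelConcat k c m)
    (hend : k.toFun k.len = c.toFun 0) : m.toFun 0 = k.toFun 0 :=
  hm.2.1 0 ⟨le_refl 0, sub_nonneg.2 (cancelAmt_spec hend).2.1⟩

lemma IsCancelConcat.end' {k c m : RPath X} (hm : IsCancelConcat k c m)
    (hend : k.toFun k.len = c.toFun 0) : m.toFun m.len = c.toFun c.len := by
  obtain ⟨_, _, hAc, _⟩ := cancelAmt_spec hend
  have h1 : k.len - cancelAmt k c ≤ m.len := by rw [hm.1]; linarith
  rw [hm.2.2 m.len ⟨h1, le_refl _⟩]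
  congr 1
  rw [hm.1]; ring

lemma no_symm_around (c : RPath X) {p δ : ℝ} (hδ : 0 < δ) (h0 : δ ≤ p) (hl : p + δ ≤ c.len)
    (hsym : ∀ u ∈ Icc (0:ℝ) δ, c.toFun (p - u) = c.toFun (p + u)) : False := by
  apply no_symm c (u := p - δ) (v := p + δ) (by linarith) (by linarith) hl
  intro t ht
  rcases le_total t p with h | h
  · have h1 := hsym (p - t) ⟨by linarith [ht.1], by linarith [ht.1]⟩
    have e1 : p - (p - t) = t := by ring
    have e2 : p - δ + (p + δ) - t = p + (p - t) := by ring
    rw [e1] at h1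
    rw [e2]
    exact h1
  · have h1 := hsym (t - p) ⟨by linarith, by linarith [ht.2]⟩
    have e1 : p + (t - p) = t := by ring
    have e2 : p - δ + (p + δ) - t = p - (t - p) := by ring
    rw [e1] at h1
    rw [e2]
    exact h1.symm

lemma cancel_concat_id {k c m : RPath X} (hm : IsCancelConcat k c m)
    (hend : k.toFun k.len = c.toFun 0) (hk0 : k.len = 0) : m = c := by
  obtain ⟨hA0, hAk, _, _⟩ := cancelAmt_spec hend
  have hA : cancelAmt k c = 0 := le_antisymm (hk0 ▸ hAk) hA0
  have hlen : m.len = c.len := by rw [hm.1, hA, hk0]; ring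
  apply ext' hlen
  intro t ht
  have h2 := hm.2.2 t ⟨by rw [hk0, hA]; simpa using ht.1, ht.2⟩
  rw [h2]
  congr 1
  rw [hk0, hA]; ring

lemma cancel_concat_free {k c : RPath X} (hm : IsCancelConcat k c c)
    (hend : k.toFun k.len = c.toFun 0) : k.len = 0 := by
  obtain ⟨hA0, hAk, hAc, hag⟩ := cancelAmt_spec hend
  set A := cancelAmt k c with hA
  have hKA : k.len = 2 * A := by have := hm.1; linarith
  by_contra hK
  have hKpos : 0 < k.len := lt_of_le_of_ne k.len_nonneg (Ne.symm hK)
  have h1 : ∀ t ∈ Icc (0:ℝ) A, c.toFun t = k.toFun t := by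
    intro t ht
    exact hm.2.1 t ⟨ht.1, by rw [hKA]; linarith [ht.2]⟩
  have hsym : ∀ t ∈ Icc (0:ℝ) k.len, k.toFun t = k.toFun (0 + k.len - t) := by
    intro t ht
    rw [zero_add]
    rcases le_total t A with h | h
    · exact ((hag t ⟨ht.1, h⟩).trans (h1 t ⟨ht.1, h⟩)).symm
    · have h2 : k.len - t ∈ Icc (0:ℝ) A := ⟨by linarith [ht.2], by rw [hKA] at ht ⊢; linarith [ht.2]⟩
      have e1 := hag (k.len - t) h2
      rw [sub_sub_cancel] at e1
      rw [e1, h1 (k.len - t) h2]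
  exact no_symm k (le_refl 0) hKpos (le_refl _) hsym

end RPath
namespace RPath

variable {X : Type*} [MetricSpace X]

lemma wedge_star {k c₁ c₂ m₁ m₂ : RPath X}
    (h1 : IsCancelConcat k c₁ m₁) (h2 : IsCancelConcat k c₂ m₂)
    (he1 : k.toFun k.len = c₁.toFun 0) (he2 : k.toFun k.len = c₂.toFun 0)
    (hA : cancelAmt k c₁ ≤ cancelAmt k c₂) :
    wedgeLen m₁ m₂ = k.len - cancelAmt k c₁ - cancelAmt k c₂ + wedgeLen c₁ c₂ := by
  have hc12 : c₁.toFun 0 = c₂.toFun 0 := he1.symm.trans he2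
  have hm12 : m₁.toFun 0 = m₂.toFun 0 := (h1.start he1).trans (h2.start he2).symm
  obtain ⟨hA10, hA1k, hA1c, hag1⟩ := cancelAmt_spec he1
  obtain ⟨hA20, hA2k, hA2c, hag2⟩ := cancelAmt_spec he2
  obtain ⟨hl1, h1a, h1b⟩ := h1
  obtain ⟨hl2, h2a, h2b⟩ := h2
  set A₁ := cancelAmt k c₁ with hA₁def
  set A₂ := cancelAmt k c₂ with hA₂def
  obtain ⟨hW0, hWc1, hWc2, hWag⟩ := wedgeLen_spec hc12
  obtain ⟨hV0, hVm1, hVm2, hVag⟩ := wedgeLen_spec hm12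
  set W := wedgeLen c₁ c₂ with hWdef
  set V := wedgeLen m₁ m₂ with hVdef
  have hWA : A₁ ≤ W := by
    apply le_wedgeLen hA10 hA1c (le_trans hA hA2c)
    intro t ht
    exact ((hag1 t ht).symm).trans (hag2 t ⟨ht.1, ht.2.trans hA⟩)
  rcases eq_or_lt_of_le hA with heq | hlt
  · -- equal cancellation amounts
    have hge : k.len - 2 * A₁ + W ≤ V := by
      apply le_wedgeLen (by linarith) (by linarith) (by rw [← heq] at hl2; linarith)
      intro t ht
      rcases le_total t (k.len - A₁) with h | h
      · rw [h1a t ⟨ht.1, h⟩, h2a t ⟨ht.1, by rw [← heq]; exact h⟩]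
      · have q1 : m₁.toFun t = c₁.toFun (t - (k.len - A₁) + A₁) :=
          h1b t ⟨h, by linarith [ht.2]⟩
        have q2 : m₂.toFun t = c₂.toFun (t - (k.len - A₂) + A₂) :=
          h2b t ⟨by rw [← heq]; exact h, by rw [← heq] at hl2; linarith [ht.2]⟩
        rw [q1, q2, ← heq]
        exact hWag (t - (k.len - A₁) + A₁) ⟨by linarith, by linarith [ht.2]⟩
    have hle : V ≤ k.len - 2 * A₁ + W := by
      by_contra hgt
      push_neg at hgt
      rcases le_or_gt c₁.len W with hL1 | hL1
      · have : W = c₁.len := le_antisymm hWc1 hL1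
        linarith
      rcases le_or_gt c₂.len W with hL2 | hL2
      · have : W = c₂.len := le_antisymm hWc2 hL2
        rw [← heq] at hl2; linarith
      set δ := min (V - (k.len - 2 * A₁ + W)) (min (c₁.len - W) (c₂.len - W)) with hδdef
      have hδ1 : δ ≤ V - (k.len - 2 * A₁ + W) := min_le_left _ _
      have hδ2 : δ ≤ c₁.len - W := le_trans (min_le_right _ _) (min_le_left _ _)
      have hδ3 : δ ≤ c₂.len - W := le_trans (min_le_right _ _) (min_le_right _ _)
      have hδ : 0 < δ := lt_min (by linarith) (lt_min (by linarith) (by linarith))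
      have : W + δ ≤ W := by
        apply le_wedgeLen (by linarith) (by linarith) (by linarith)
        intro t ht
        rcases le_total t W with h | h
        · exact hWag t ⟨ht.1, h⟩
        · have hv := hVag (t + k.len - 2 * A₁) ⟨by linarith, by linarith [ht.2]⟩
          have q1 : m₁.toFun (t + k.len - 2 * A₁) = c₁.toFun t := by
            rw [h1b (t + k.len - 2 * A₁) ⟨by linarith, by linarith [ht.2]⟩]
            congr 1; ring
          have q2 : m₂.toFun (t + k.len - 2 * A₁) = c₂.toFun t := by
            rw [h2b (t + k.len - 2 * A₁) ⟨by rw [← heq]; linarith,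
              by rw [← heq] at hl2; linarith [ht.2]⟩]
            rw [← heq]; congr 1; ring
          rw [← q1, ← q2, hv]
      linarith
    rw [← heq]
    linarith
  · -- A₁ < A₂
    have hWle : W ≤ A₁ := by
      by_contra hW
      push_neg at hW
      have hs : min W A₂ ≤ A₁ := by
        apply le_cancelAmt (le_min hW0 hA20) (le_trans (min_le_right _ _) hA2k)
          (le_trans (min_le_left _ _) hWc1)
        intro t ht
        rw [hWag t ⟨ht.1, le_trans ht.2 (min_le_left _ _)⟩]
        exact hag2 t ⟨ht.1, le_trans ht.2 (min_le_right _ _)⟩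
      have : A₁ < min W A₂ := lt_min hW hlt
      linarith
    have hWeq : W = A₁ := le_antisymm hWle hWA
    have hVge : k.len - A₂ ≤ V := by
      apply le_wedgeLen (by linarith) (by linarith) (by linarith)
      intro t ht
      rw [h1a t ⟨ht.1, by linarith [ht.2]⟩, h2a t ⟨ht.1, ht.2⟩]
    have hVle : V ≤ k.len - A₂ := by
      by_contra hgt
      push_neg at hgt
      rcases le_or_gt c₂.len A₂ with hL2 | hL2
      · have : A₂ = c₂.len := le_antisymm hA2c hL2
        linarith
      set δ := min (V - (k.len - A₂)) (min (A₂ - A₁) (c₂.len - A₂)) with hδdef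
      have hδ1 : δ ≤ V - (k.len - A₂) := min_le_left _ _
      have hδ2 : δ ≤ A₂ - A₁ := le_trans (min_le_right _ _) (min_le_left _ _)
      have hδ3 : δ ≤ c₂.len - A₂ := le_trans (min_le_right _ _) (min_le_right _ _)
      have hδ : 0 < δ := lt_min (by linarith) (lt_min (by linarith) (by linarith))
      apply no_symm_around c₂ (p := A₂) (δ := δ) hδ (by linarith) (by linarith)
      intro u hu
      have hv := hVag (k.len - A₂ + u) ⟨by linarith [hu.1], by linarith [hu.2]⟩
      have hm1 : m₁.toFun (k.len - A₂ + u) = k.toFun (k.len - A₂ + u) :=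
        h1a _ ⟨by linarith [hu.1], by linarith [hu.2]⟩
      have hk2 : k.toFun (k.len - (A₂ - u)) = c₂.toFun (A₂ - u) :=
        hag2 (A₂ - u) ⟨by linarith [hu.2], by linarith [hu.1]⟩
      have e : k.len - (A₂ - u) = k.len - A₂ + u := by ring
      rw [e] at hk2
      have hm2 : m₂.toFun (k.len - A₂ + u) = c₂.toFun ((k.len - A₂ + u) - (k.len - A₂) + A₂) :=
        h2b _ ⟨by linarith [hu.1], by linarith [hu.2]⟩
      have e2 : (k.len - A₂ + u) - (k.len - A₂) + A₂ = A₂ + u := by ring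
      rw [e2] at hm2
      rw [← hk2, ← hm1, hv, hm2]
    linarith

lemma rhoDist_star {k c₁ c₂ m₁ m₂ : RPath X}
    (h1 : IsCancelConcat k c₁ m₁) (h2 : IsCancelConcat k c₂ m₂)
    (he1 : k.toFun k.len = c₁.toFun 0) (he2 : k.toFun k.len = c₂.toFun 0) :
    rhoDist m₁ m₂ = rhoDist c₁ c₂ := by
  rcases le_total (cancelAmt k c₁) (cancelAmt k c₂) with h | h
  · have key := wedge_star h1 h2 he1 he2 h
    unfold rhoDist
    rw [h1.1, h2.1, key]; ring
  · have key := wedge_star h2 h1 he2 he1 h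
    unfold rhoDist
    rw [h1.1, h2.1, wedgeLen_comm m₁ m₂, wedgeLen_comm c₁ c₂, key]; ring

end RPath
namespace RPath

variable {X : Type*} [MetricSpace X]

lemma cancel_concat_assoc {k₁ k₂ c p m q₁ q₂ : RPath X}
    (hp : IsCancelConcat k₁ k₂ p) (hm : IsCancelConcat k₂ c m)
    (hq1 : IsCancelConcat p c q₁) (hq2 : IsCancelConcat k₁ m q₂)
    (he1 : k₁.toFun k₁.len = k₂.toFun 0) (he2 : k₂.toFun k₂.len = c.toFun 0) :
    q₁ = q₂ := by
  have he3 : p.toFun p.len = c.toFun 0 := (hp.end' he1).trans he2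
  have he4 : k₁.toFun k₁.len = m.toFun 0 := he1.trans (hm.start he2).symm
  obtain ⟨hA0, hAk1, hAk2, hagA⟩ := cancelAmt_spec he1
  obtain ⟨hB0, hBk2, hBc, hagB⟩ := cancelAmt_spec he2
  obtain ⟨hC0, hCk1, hCm, hagC⟩ := cancelAmt_spec he4
  obtain ⟨hD0, hDp, hDc, hagD⟩ := cancelAmt_spec he3
  obtain ⟨hplen, hpa, hpb⟩ := hp
  obtain ⟨hmlen, hma, hmb⟩ := hm
  obtain ⟨hq1len, hq1a, hq1b⟩ := hq1
  obtain ⟨hq2len, hq2a, hq2b⟩ := hq2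
  set A := cancelAmt k₁ k₂ with hAdef
  set B := cancelAmt k₂ c with hBdef
  set C := cancelAmt k₁ m with hCdef
  set D := cancelAmt p c with hDdef
  have hCm' := hCm
  rw [hmlen] at hCm'
  have hDp' := hDp
  rw [hplen] at hDp'
  have hrev : ∀ t ∈ Icc (0:ℝ) (k₂.len - A), p.toFun (p.len - t) = k₂.toFun (k₂.len - t) := by
    intro t ht
    rw [hpb (p.len - t) ⟨by rw [hplen]; linarith [ht.2], by linarith [ht.1]⟩]
    congr 1
    rw [hplen]; ring
  rcases lt_trichotomy (A + B) k₂.len with hI | hII | hIII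
  · -- Case I : disjoint cancellations
    have hCge : A ≤ C := by
      apply le_cancelAmt hA0 hAk1 (by rw [hmlen]; linarith)
      intro t ht
      rw [hma t ⟨ht.1, by linarith [ht.2]⟩]
      exact hagA t ht
    have hCle : C ≤ A := by
      rcases le_total C (k₂.len - B) with h | h
      · apply le_cancelAmt hC0 hCk1 (by linarith)
        intro t ht
        rw [← hma t ⟨ht.1, by linarith [ht.2]⟩]
        exact hagC t ht
      · exfalso
        have hKB : k₂.len - B ≤ A := by
          apply le_cancelAmt (by linarith) (by linarith) (by linarith)
          intro t ht
          rw [← hma t ⟨ht.1, ht.2⟩]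
          exact hagC t ⟨ht.1, by linarith [ht.2]⟩
        linarith
    have hC' : C = A := le_antisymm hCle hCge
    have hDge : B ≤ D := by
      apply le_cancelAmt hB0 (by rw [hplen]; linarith) hBc
      intro t ht
      rw [hrev t ⟨ht.1, by linarith [ht.2]⟩]
      exact hagB t ht
    have hDle : D ≤ B := by
      by_contra hx
      push_neg at hx
      have hmin : min D (k₂.len - A) ≤ B := by
        apply le_cancelAmt (le_min hD0 (by linarith)) (le_trans (min_le_right _ _) (by linarith))
          (le_trans (min_le_left _ _) hDc)
        intro t ht
        rw [← hrev t ⟨ht.1, le_trans ht.2 (min_le_right _ _)⟩]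
        exact hagD t ⟨ht.1, le_trans ht.2 (min_le_left _ _)⟩
      have : B < min D (k₂.len - A) := lt_min hx (by linarith)
      linarith
    have hD' : D = B := le_antisymm hDle hDge
    have hlen : q₁.len = q₂.len := by rw [hq1len, hq2len, hplen, hmlen, hC', hD']; ring
    apply ext' hlen
    intro t ht
    obtain ⟨ht0, ht1⟩ := ht
    have htq2 : t ≤ q₂.len := by rw [← hlen]; exact ht1
    have htE := ht1
    rw [hq1len, hplen, hD'] at htE
    rcases le_total t (k₁.len - A) with h1 | h1
    · rw [hq2a t ⟨ht0, by rw [hC']; exact h1⟩]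
      rw [hq1a t ⟨ht0, by rw [hplen, hD']; linarith⟩]
      exact hpa t ⟨ht0, h1⟩
    · rcases le_total t (k₁.len + k₂.len - 2*A - B) with h2 | h2
      · have e1 : q₁.toFun t = p.toFun t := hq1a t ⟨ht0, by rw [hplen, hD']; linarith⟩
        have e2 : p.toFun t = k₂.toFun (t - (k₁.len - A) + A) := hpb t ⟨h1, by rw [hplen]; linarith⟩
        have e3 : q₂.toFun t = m.toFun (t - (k₁.len - C) + C) := hq2b t ⟨by rw [hC']; exact h1, htq2⟩
        have e4 : m.toFun (t - (k₁.len - C) + C) = k₂.toFun (t - (k₁.len - C) + C) :=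
          hma _ ⟨by rw [hC']; linarith, by rw [hC']; linarith⟩
        rw [e1, e2, e3, e4]
        congr 1
        rw [hC']
      · have e1 : q₁.toFun t = c.toFun (t - (p.len - D) + D) :=
          hq1b t ⟨by rw [hplen, hD']; linarith, ht1⟩
        have e3 : q₂.toFun t = m.toFun (t - (k₁.len - C) + C) :=
          hq2b t ⟨by rw [hC']; linarith, htq2⟩
        have e4 : m.toFun (t - (k₁.len - C) + C)
            = c.toFun ((t - (k₁.len - C) + C) - (k₂.len - B) + B) :=
          hmb _ ⟨by rw [hC']; linarith, by rw [hC', hmlen]; linarith⟩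
        rw [e1, e3, e4]
        congr 1
        rw [hC', hD', hplen]; ring
  · -- Case II : exactly adjacent cancellations
    have hCge : A ≤ C := by
      apply le_cancelAmt hA0 hAk1 (by rw [hmlen]; linarith)
      intro t ht
      rw [hma t ⟨ht.1, by linarith [ht.2]⟩]
      exact hagA t ht
    have hDge : B + (C - A) ≤ D := by
      apply le_cancelAmt (by linarith) (by rw [hplen]; linarith) (by linarith)
      intro t ht
      rcases le_total t B with h | h
      · rw [hrev t ⟨ht.1, by linarith⟩]
        exact hagB t ⟨ht.1, h⟩
      · have hsp : B + (C - A) ≤ p.len := by rw [hplen]; linarith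
        have m1 : p.toFun (p.len - t) = k₁.toFun (p.len - t) :=
          hpa _ ⟨by linarith [ht.2], by rw [hplen]; linarith⟩
        have m2 : k₁.toFun (k₁.len - (A + (t - B))) = m.toFun (A + (t - B)) :=
          hagC _ ⟨by linarith, by linarith [ht.2]⟩
        have m3 : m.toFun (A + (t - B)) = c.toFun ((A + (t - B)) - (k₂.len - B) + B) :=
          hmb _ ⟨by linarith, by linarith [ht.2, hCm]⟩
        have e : k₁.len - (A + (t - B)) = p.len - t := by rw [hplen]; linarith
        rw [m1, ← e, m2, m3]
        congr 1
        linarith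
    have hDle : D ≤ B + (C - A) := by
      by_contra hx
      push_neg at hx
      have hkey : A + (D - B) ≤ C := by
        apply le_cancelAmt (by linarith) (by linarith) (by rw [hmlen]; linarith)
        intro t ht
        rcases le_total t A with h | h
        · rw [hma t ⟨ht.1, by linarith⟩]
          exact hagA t ⟨ht.1, h⟩
        · have w1 : p.toFun (p.len - (B + (t - A))) = c.toFun (B + (t - A)) :=
            hagD _ ⟨by linarith, by linarith [ht.2]⟩
          have w2 : p.toFun (p.len - (B + (t - A))) = k₁.toFun (p.len - (B + (t - A))) :=
            hpa _ ⟨by rw [hplen]; linarith [ht.2], by rw [hplen]; linarith⟩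
          have hsm : A + (D - B) ≤ m.len := by rw [hmlen]; linarith
          have w3 : m.toFun t = c.toFun (t - (k₂.len - B) + B) :=
            hmb t ⟨by linarith, by linarith [ht.2]⟩
          rw [w3]
          have e : k₁.len - t = p.len - (B + (t - A)) := by rw [hplen]; linarith
          rw [e, ← w2, w1]
          congr 1
          linarith
      linarith
    have hDval : D = B + (C - A) := le_antisymm hDle hDge
    have hsplit : p.len - D = k₁.len - C := by rw [hplen, hDval]; linarith
    have hlen : q₁.len = q₂.len := by rw [hq1len, hq2len, hplen, hmlen, hDval]; ring
    apply ext' hlen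
    intro t ht
    obtain ⟨ht0, ht1⟩ := ht
    have htq2 : t ≤ q₂.len := by rw [← hlen]; exact ht1
    rcases le_total t (k₁.len - C) with h | h
    · rw [hq1a t ⟨ht0, by rw [hsplit]; exact h⟩, hq2a t ⟨ht0, h⟩]
      exact hpa t ⟨ht0, by linarith⟩
    · have e1 : q₁.toFun t = c.toFun (t - (p.len - D) + D) :=
        hq1b t ⟨by rw [hsplit]; exact h, ht1⟩
      have e2 : q₂.toFun t = m.toFun (t - (k₁.len - C) + C) := hq2b t ⟨h, htq2⟩
      have e3 : m.toFun (t - (k₁.len - C) + C)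
          = c.toFun ((t - (k₁.len - C) + C) - (k₂.len - B) + B) :=
        hmb _ ⟨by linarith, by linarith [hq2len, htq2]⟩
      rw [e1, e2, e3]
      congr 1
      rw [hplen, hDval]; ring
  · -- Case III : overlapping cancellations
    have hCval : C = k₂.len - B := by
      apply le_antisymm
      · by_contra hx
        push_neg at hx
        rcases le_total c.len B with hBL | hBL
        · linarith
        · set δ := min (C - (k₂.len - B)) (min (A + B - k₂.len) (c.len - B)) with hδdef
          have hδ1 : δ ≤ C - (k₂.len - B) := min_le_left _ _
          have hδ2 : δ ≤ A + B - k₂.len := le_trans (min_le_right _ _) (min_le_left _ _)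
          have hδ3 : δ ≤ c.len - B := le_trans (min_le_right _ _) (min_le_right _ _)
          have hδpos : 0 < δ := lt_min (by linarith) (lt_min (by linarith) (by linarith))
          apply no_symm_around c (p := B) (δ := δ) hδpos (by linarith) (by linarith)
          intro u hu
          have x1 : k₁.toFun (k₁.len - (k₂.len - B + u)) = m.toFun (k₂.len - B + u) :=
            hagC _ ⟨by linarith [hu.1], by linarith [hu.2]⟩
          have x2 : m.toFun (k₂.len - B + u) = c.toFun ((k₂.len - B + u) - (k₂.len - B) + B) :=
            hmb _ ⟨by linarith [hu.1], by linarith [hu.2, hCm]⟩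
          have x3 : k₁.toFun (k₁.len - (k₂.len - B + u)) = k₂.toFun (k₂.len - B + u) :=
            hagA _ ⟨by linarith [hu.1], by linarith [hu.2]⟩
          have x4 : k₂.toFun (k₂.len - (B - u)) = c.toFun (B - u) :=
            hagB _ ⟨by linarith [hu.2], by linarith [hu.1]⟩
          have e : k₂.len - (B - u) = k₂.len - B + u := by ring
          rw [e] at x4
          have e2 : (k₂.len - B + u) - (k₂.len - B) + B = B + u := by ring
          rw [e2] at x2
          rw [← x4, ← x3, x1, x2]
      · apply le_cancelAmt (by linarith) (by linarith) (by rw [hmlen]; linarith)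
        intro t ht
        rw [hma t ⟨ht.1, ht.2⟩]
        exact hagA t ⟨ht.1, by linarith [ht.2]⟩
    have hDval : D = k₂.len - A := by
      apply le_antisymm
      · by_contra hx
        push_neg at hx
        rcases le_total k₁.len A with hKA | hKA
        · linarith
        · set δ := min (D - (k₂.len - A)) (min (A + B - k₂.len) (k₁.len - A)) with hδdef
          have hδ1 : δ ≤ D - (k₂.len - A) := min_le_left _ _
          have hδ2 : δ ≤ A + B - k₂.len := le_trans (min_le_right _ _) (min_le_left _ _)
          have hδ3 : δ ≤ k₁.len - A := le_trans (min_le_right _ _) (min_le_right _ _)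
          have hδpos : 0 < δ := lt_min (by linarith) (lt_min (by linarith) (by linarith))
          apply no_symm_around k₁ (p := k₁.len - A) (δ := δ) hδpos (by linarith) (by linarith)
          intro u hu
          have x1 : p.toFun (p.len - (k₂.len - A + u)) = c.toFun (k₂.len - A + u) :=
            hagD _ ⟨by linarith [hu.1], by linarith [hu.2]⟩
          have x2 : p.toFun (p.len - (k₂.len - A + u)) = k₁.toFun (p.len - (k₂.len - A + u)) :=
            hpa _ ⟨by rw [hplen]; linarith [hu.2], by rw [hplen]; linarith [hu.1]⟩
          have x3 : k₂.toFun (k₂.len - (k₂.len - A + u)) = c.toFun (k₂.len - A + u) :=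
            hagB _ ⟨by linarith [hu.1], by linarith [hu.2]⟩
          have x4 : k₁.toFun (k₁.len - (A - u)) = k₂.toFun (A - u) :=
            hagA _ ⟨by linarith [hu.2], by linarith [hu.1]⟩
          have e1 : p.len - (k₂.len - A + u) = k₁.len - A - u := by rw [hplen]; ring
          have e2 : k₂.len - (k₂.len - A + u) = A - u := by ring
          have e3 : k₁.len - (A - u) = k₁.len - A + u := by ring
          rw [e1] at x1 x2
          rw [e2] at x3
          rw [e3] at x4
          rw [← x2, x1, ← x3, ← x4]
      · apply le_cancelAmt (by linarith) (by rw [hplen]; linarith) (by linarith)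
        intro t ht
        rw [hrev t ⟨ht.1, ht.2⟩]
        exact hagB t ⟨ht.1, by linarith [ht.2]⟩
    have hlen : q₁.len = q₂.len := by rw [hq1len, hq2len, hplen, hmlen, hCval, hDval]; ring
    apply ext' hlen
    intro t ht
    obtain ⟨ht0, ht1⟩ := ht
    have htq2 : t ≤ q₂.len := by rw [← hlen]; exact ht1
    have hsplit1 : p.len - D = k₁.len - A := by rw [hplen, hDval]; ring
    rcases le_total t (k₁.len - A) with h | h
    · rw [hq1a t ⟨ht0, by rw [hsplit1]; exact h⟩]
      rw [hq2a t ⟨ht0, by rw [hCval]; linarith⟩]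
      exact hpa t ⟨ht0, h⟩
    · have e1 : q₁.toFun t = c.toFun (t - (p.len - D) + D) :=
        hq1b t ⟨by rw [hsplit1]; exact h, ht1⟩
      rcases le_total t (k₁.len - C) with h2 | h2
      · rw [e1, hq2a t ⟨ht0, h2⟩]
        have hCval2 := h2
        rw [hCval] at hCval2
        have y1 : k₁.toFun (k₁.len - (k₁.len - t)) = k₂.toFun (k₁.len - t) :=
          hagA _ ⟨by linarith, by linarith⟩
        have y2 : k₂.toFun (k₂.len - (t + k₂.len - k₁.len)) = c.toFun (t + k₂.len - k₁.len) :=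
          hagB _ ⟨by linarith, by linarith⟩
        have f1 : k₁.len - (k₁.len - t) = t := by ring
        have f2 : k₂.len - (t + k₂.len - k₁.len) = k₁.len - t := by ring
        rw [f1] at y1
        rw [f2] at y2
        have f3 : t - (p.len - D) + D = t + k₂.len - k₁.len := by rw [hplen, hDval]; ring
        rw [f3, ← y2, ← y1]
      · have e2 : q₂.toFun t = m.toFun (t - (k₁.len - C) + C) := hq2b t ⟨h2, htq2⟩
        have e3 : m.toFun (t - (k₁.len - C) + C)
            = c.toFun ((t - (k₁.len - C) + C) - (k₂.len - B) + B) :=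
          hmb _ ⟨by rw [hCval]; linarith [h2], by linarith [hq2len, htq2]⟩
        rw [e1, e2, e3]
        congr 1
        rw [hplen, hCval, hDval]; ring

end RPath
/-- For a length space `X`, the group `Λ(X)` of ρ-loops at the
basepoint acts freely by isometries on the space `X̄` of ρ-paths at the basepoint via
left cancelled concatenation `k · c := k ⋆ c`:
`d(k ⋆ c₁, k ⋆ c₂) = d(c₁, c₂)`, the identity (constant) loop acts trivially, the
action is associative, and it is free. -/
theorem loopGroup_acts_freely_isometrically {X : Type*} [MetricSpace X]
    (hX : IsLengthSpace X) (base : X)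
    (star : RPath X → RPath X → RPath X)
    (hstar : ∀ k c : RPath X, k.EndsAt (c.toFun 0) → RPath.IsCancelConcat k c (star k c)) :
    -- the action is by isometries
    (∀ k c₁ c₂ : RPath X, k.StartsAt base → k.EndsAt base →
      c₁.StartsAt base → c₂.StartsAt base →
      RPath.rhoDist (star k c₁) (star k c₂) = RPath.rhoDist c₁ c₂) ∧
    -- the constant loop acts as the identity
    (∀ k c : RPath X, k.StartsAt base → k.EndsAt base → c.StartsAt base →
      k.len = 0 → star k c = c) ∧
    -- the action is associative
    (∀ k₁ k₂ c : RPath X, k₁.StartsAt base → k₁.EndsAt base →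
      k₂.StartsAt base → k₂.EndsAt base → c.StartsAt base →
      star (star k₁ k₂) c = star k₁ (star k₂ c)) ∧
    -- the action is free
    (∀ k c : RPath X, k.StartsAt base → k.EndsAt base → c.StartsAt base →
      star k c = c → k.len = 0) := by
  refine ⟨?_, ?_, ?_, ?_⟩
  · intro k c₁ c₂ hks hke h1s h2s
    have he1 : k.toFun k.len = c₁.toFun 0 := Eq.trans hke (Eq.symm h1s)
    have he2 : k.toFun k.len = c₂.toFun 0 := Eq.trans hke (Eq.symm h2s)
    exact RPath.rhoDist_star (hstar k c₁ he1) (hstar k c₂ he2) he1 he2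
  · intro k c hks hke hcs hk0
    have he : k.toFun k.len = c.toFun 0 := Eq.trans hke (Eq.symm hcs)
    exact RPath.cancel_concat_id (hstar k c he) he hk0
  · intro k₁ k₂ c h1s h1e h2s h2e hcs
    have he1 : k₁.toFun k₁.len = k₂.toFun 0 := Eq.trans h1e (Eq.symm h2s)
    have he2 : k₂.toFun k₂.len = c.toFun 0 := Eq.trans h2e (Eq.symm hcs)
    have hp := hstar k₁ k₂ he1
    have hm := hstar k₂ c he2
    have he3 : (star k₁ k₂).toFun (star k₁ k₂).len = c.toFun 0 := (hp.end' he1).trans he2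
    have he4 : k₁.toFun k₁.len = (star k₂ c).toFun 0 := he1.trans (hm.start he2).symm
    exact RPath.cancel_concat_assoc hp hm (hstar _ c he3) (hstar k₁ _ he4) he1 he2
  · intro k c hks hke hcs heq
    have he : k.toFun k.len = c.toFun 0 := Eq.trans hke (Eq.symm hcs)
    have h := hstar k c he
    rw [heq] at h
    exact RPath.cancel_concat_free h he
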